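/- With δ(A) = p·trdeg(A) − |A∩N|: if B ≤ A is a minimal self-sufficient extension of finite sets, all points of A∖B are black, and δ(A/B) = p−1, then A = B ∪ {a} for a single black point a transcendental over the field generated by B. -/

import Mathlib

set_option maxHeartbeats 1000000
set_option synthInstance.maxHeartbeats 400000

open scoped Classical

noncomputable def ftrdeg (K : Type*) [Field K] (A : Finset K) : ℕ :=
  sSup {n | ∃ s ⊆ A, s.card = n ∧
    AlgebraicIndependent (⊥ : Subfield K) (fun x : {y : K // y ∈ s} => (x : K))}

noncomputable def deltaF (K : Type*) [Field K] (p : ℕ) (N : Set K) (A : Finset K) : ℤ :=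
  (p : ℤ) * ftrdeg K A - (A.filter (· ∈ N)).card

section Aux

variable {K : Type*} [Field K]

lemma ftrdeg_bdd (A : Finset K) : BddAbove {n | ∃ s ⊆ A, s.card = n ∧
    AlgebraicIndependent (⊥ : Subfield K) (fun x : {y : K // y ∈ s} => (x : K))} := by
  refine ⟨A.card, fun n hn => ?_⟩
  obtain ⟨s, hs, rfl, -⟩ := hn
  exact Finset.card_le_card hs

lemma ftrdeg_nonempty (A : Finset K) : Set.Nonempty {n | ∃ s ⊆ A, s.card = n ∧
    AlgebraicIndependent (⊥ : Subfield K) (fun x : {y : K // y ∈ s} => (x : K))} := by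
  refine ⟨0, ∅, Finset.empty_subset _, Finset.card_empty, ?_⟩
  haveI : IsEmpty ((↑(∅ : Finset K) : Set K)) := by simp
  exact algebraicIndependent_empty_type

lemma ftrdeg_spec (A : Finset K) : ∃ s ⊆ A, s.card = ftrdeg K A ∧
    AlgebraicIndependent (⊥ : Subfield K) ((↑) : (↑s : Set K) → K) :=
  Nat.sSup_mem (ftrdeg_nonempty A) (ftrdeg_bdd A)

lemma le_ftrdeg {A s : Finset K} (hs : s ⊆ A)
    (h : AlgebraicIndependent (⊥ : Subfield K) ((↑) : (↑s : Set K) → K)) :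
    s.card ≤ ftrdeg K A :=
  le_csSup (ftrdeg_bdd A) ⟨s, hs, rfl, h⟩

lemma ftrdeg_mono {A B : Finset K} (h : B ⊆ A) : ftrdeg K B ≤ ftrdeg K A := by
  obtain ⟨s, hs, hcard, hAI⟩ := ftrdeg_spec B
  exact hcard ▸ le_ftrdeg (hs.trans h) hAI

lemma ftrdeg_insert_le (B : Finset K) (a : K) : ftrdeg K (insert a B) ≤ ftrdeg K B + 1 := by
  obtain ⟨s, hs, hcard, hAI⟩ := ftrdeg_spec (insert a B)
  have h1 : s.erase a ⊆ B := by
    intro x hx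
    rcases Finset.mem_insert.1 (hs (Finset.mem_of_mem_erase hx)) with h | h
    · exact absurd h (Finset.ne_of_mem_erase hx)
    · exact h
  have h2 : AlgebraicIndependent (⊥ : Subfield K) ((↑) : (↑(s.erase a) : Set K) → K) :=
    hAI.mono (by intro x hx; exact Finset.mem_of_mem_erase hx)
  have := le_ftrdeg h1 h2
  calc ftrdeg K (insert a B) = s.card := hcard.symm
    _ ≤ (s.erase a).card + 1 := by
        by_cases ha : a ∈ s
        · rw [Finset.card_erase_of_mem ha]; omega
        · rw [Finset.erase_eq_of_notMem ha]; omega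
    _ ≤ ftrdeg K B + 1 := by omega

lemma aiInsertIff {u : Set K} {b : K} (hb : b ∉ u)
    (hu : AlgebraicIndependent (⊥ : Subfield K) ((↑) : u → K)) :
    AlgebraicIndependent (⊥ : Subfield K) (fun x : (insert b u : Set K) => (x : K)) ↔
      Transcendental (Algebra.adjoin (⊥ : Subfield K) u) b := by
  have heq : (fun o : Option u => o.elim b (↑)) ∘ (Set.subtypeInsertEquivOption hb) =
      (fun x : (insert b u : Set K) => (x : K)) := by
    ext x; by_cases h : ↑x = b <;> simp [h, Set.subtypeInsertEquivOption]
  rw [← heq, algebraicIndependent_equiv, hu.option_iff_transcendental, Subtype.range_coe]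

lemma isAlgebraic_adjoinField_iff (t : Set K) (a : K) :
    IsAlgebraic (IntermediateField.adjoin (⊥ : Subfield K) t) a ↔
    IsAlgebraic (Algebra.adjoin (⊥ : Subfield K) t) a := by
  set F := (⊥ : Subfield K)
  set D := Algebra.adjoin F t with hD
  set E := IntermediateField.adjoin F t with hE
  have hle : D ≤ E.toSubalgebra := IntermediateField.algebra_adjoin_le_adjoin F t
  letI : Algebra D E := (Subalgebra.inclusion hle).toRingHom.toAlgebra
  haveI : IsScalarTower D E K := IsScalarTower.of_algebraMap_eq fun x => rfl
  have hmem : ∀ q : MvPolynomial t F, MvPolynomial.aeval (Subtype.val : t → K) q ∈ D := by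
    intro q
    have h2 : MvPolynomial.aeval (Subtype.val : t → K) q ∈
        Algebra.adjoin F (Set.range (Subtype.val : t → K)) := by
      rw [Algebra.adjoin_range_eq_range_aeval]
      exact ⟨q, rfl⟩
    rwa [Subtype.range_coe] at h2
  haveI : IsFractionRing D E := by
    refine ⟨?_, ?_, ?_⟩
    · rintro ⟨y, hy⟩
      rw [isUnit_iff_ne_zero]
      intro h0
      have hy0 : y ≠ 0 := nonZeroDivisors.ne_zero hy
      have hv := congrArg (Subtype.val : E → K) h0
      simp only [ZeroMemClass.coe_zero] at hv
      exact hy0 (Subtype.ext (by exact hv))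
    · intro z
      obtain ⟨r, s, hz⟩ := (IntermediateField.mem_adjoin_iff F (z : K)).1 z.2
      by_cases hs0 : MvPolynomial.aeval (Subtype.val : t → K) s = 0
      · refine ⟨⟨0, 1⟩, Subtype.ext ?_⟩
        show (z : K) * ((1 : D) : K) = ((0 : D) : K)
        have hzK : (z : K) = 0 := by rw [hz, hs0, div_zero]
        rw [hzK]
        simp
      · refine ⟨⟨⟨_, hmem r⟩, ⟨⟨_, hmem s⟩, mem_nonZeroDivisors_of_ne_zero ?_⟩⟩, ?_⟩
        · intro h; exact hs0 (congrArg Subtype.val h)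
        · apply Subtype.ext
          show (z : K) * MvPolynomial.aeval (Subtype.val : t → K) s
              = MvPolynomial.aeval (Subtype.val : t → K) r
          rw [hz, div_mul_cancel₀ _ hs0]
    · intro x y h
      have hv := congrArg (Subtype.val : E → K) h
      have hxy : x = y := Subtype.ext (by exact hv)
      exact ⟨1, by rw [hxy]⟩
  exact (IsFractionRing.isAlgebraic_iff D E K).symm

lemma ftrdeg_insert_le_of_isAlgebraic {B : Finset K} {a : K}
    (ha : IsAlgebraic (Subfield.closure (B : Set K)) a) :
    ftrdeg K (insert a B) ≤ ftrdeg K B := by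
  classical
  obtain ⟨s, hs, hcard, hAI⟩ := ftrdeg_spec (insert a B)
  rw [← hcard]
  by_cases has : a ∈ s
  case neg =>
    refine le_ftrdeg (fun x hx => ?_) hAI
    rcases Finset.mem_insert.1 (hs hx) with h | h
    · exact absurd (h ▸ hx) has
    · exact h
  have hs'B : s.erase a ⊆ B := by
    intro x hx
    rcases Finset.mem_insert.1 (hs (Finset.mem_of_mem_erase hx)) with h | h
    · exact absurd h (Finset.ne_of_mem_erase hx)
    · exact h
  have hAI' : AlgebraicIndependent (⊥ : Subfield K) ((↑) : (↑(s.erase a) : Set K) → K) :=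
    hAI.mono (fun x hx => Finset.mem_of_mem_erase hx)
  obtain ⟨u, hsu, hmax⟩ := exists_maximal_algebraicIndependent
    (↑(s.erase a) : Set K) (↑B : Set K) (by exact_mod_cast hs'B) hAI'
  have hAIu : AlgebraicIndependent (⊥ : Subfield K) ((↑) : u → K) := hmax.1.1
  have huB : u ⊆ ↑B := hmax.1.2
  have hufin : u.Finite := B.finite_toSet.subset huB
  by_cases hueq : u = (↑(s.erase a) : Set K)
  · exfalso
    have hanotins' : a ∉ (↑(s.erase a) : Set K) := by simp
    have hins : (insert a (↑(s.erase a) : Set K)) = (↑s : Set K) := by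
      rw [← Finset.coe_insert, Finset.insert_erase has]
    have hAIins : AlgebraicIndependent (⊥ : Subfield K)
        (fun x : (insert a (↑(s.erase a) : Set K) : Set K) => (x : K)) := by
      rw [hins]; exact hAI
    have htrans : Transcendental (Algebra.adjoin (⊥ : Subfield K) (↑(s.erase a) : Set K)) a :=
      (aiInsertIff hanotins' hAI').1 hAIins
    set E := IntermediateField.adjoin (⊥ : Subfield K) (↑(s.erase a) : Set K) with hEdef
    have halgb : ∀ b ∈ (↑B : Set K), IsAlgebraic E b := by
      intro b hb
      by_cases hbu : b ∈ (↑(s.erase a) : Set K)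
      · exact isAlgebraic_algebraMap (⟨b, IntermediateField.subset_adjoin _ _ hbu⟩ : E)
      · have hna : ¬ Transcendental (Algebra.adjoin (⊥ : Subfield K) (↑(s.erase a) : Set K)) b := by
          intro htr
          have hAIb : AlgebraicIndependent (⊥ : Subfield K)
              (fun x : (insert b (↑(s.erase a) : Set K) : Set K) => (x : K)) :=
            (aiInsertIff hbu hAI').2 htr
          have hsub : insert b (↑(s.erase a) : Set K) ⊆ ↑B :=
            Set.insert_subset hb (by exact_mod_cast hs'B)
          have hle2 := hmax.2 ⟨hAIb, hsub⟩ (by rw [hueq]; exact Set.subset_insert _ _)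
          exact hbu (hueq ▸ hle2 (Set.mem_insert b _))
        rw [Transcendental, not_not] at hna
        exact (isAlgebraic_adjoinField_iff _ b).2 hna
    set M := IntermediateField.adjoin E (↑B : Set K) with hM
    haveI halgM : Algebra.IsAlgebraic E M :=
      IntermediateField.isAlgebraic_adjoin (fun x hx => (halgb x hx).isIntegral)
    have hBM : Subfield.closure (↑B : Set K) ≤ M.toSubfield :=
      Subfield.closure_le.2 (fun x hx => IntermediateField.subset_adjoin _ _ hx)
    letI : Algebra (Subfield.closure (↑B : Set K)) M := (Subfield.inclusion hBM).toAlgebra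
    haveI : IsScalarTower (Subfield.closure (↑B : Set K)) M K :=
      IsScalarTower.of_algebraMap_eq fun x => rfl
    have hinj : Function.Injective
        (algebraMap (Subfield.closure (↑B : Set K)) M) :=
      fun x y h => Subtype.ext (by exact congrArg (Subtype.val : M → K) h)
    have haM : IsAlgebraic M a := ha.extendScalars hinj
    haveI : Algebra.IsIntegral E M := Algebra.isAlgebraic_iff_isIntegral.1 halgM
    have haE : IsIntegral E a := isIntegral_trans a haM.isIntegral
    exact htrans ((isAlgebraic_adjoinField_iff _ a).1 haE.isAlgebraic)
  · have hssub : (↑(s.erase a) : Set K) ⊂ u := hsu.ssubset_of_ne (fun h => hueq h.symm)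
    have h1 : s.erase a ⊂ hufin.toFinset := by
      rw [← Finset.coe_ssubset, Set.Finite.coe_toFinset]
      exact hssub
    have h2 : hufin.toFinset ⊆ B := by
      intro x hx
      have hxu := (hufin.mem_toFinset).1 hx
      exact_mod_cast huB hxu
    have h3 : hufin.toFinset.card ≤ ftrdeg K B :=
      le_ftrdeg h2 (hAIu.mono (by rw [hufin.coe_toFinset]))
    have h4 : s.card ≤ (s.erase a).card + 1 := by
      rw [Finset.card_erase_of_mem has]; omega
    have h5 := Finset.card_lt_card h1
    omega

lemma delta_insert {p : ℕ} {N : Set K} {B : Finset K} {a : K} (haB : a ∉ B) (haN : a ∈ N) :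
    deltaF K p N (insert a B) - deltaF K p N B =
      (p : ℤ) * (ftrdeg K (insert a B) : ℤ) - (p : ℤ) * (ftrdeg K B : ℤ) - 1 := by
  have hfilter : (insert a B).filter (· ∈ N) = insert a (B.filter (· ∈ N)) := by
    rw [Finset.filter_insert, if_pos haN]
  have hcardf : ((insert a B).filter (· ∈ N)).card = (B.filter (· ∈ N)).card + 1 := by
    rw [hfilter, Finset.card_insert_of_notMem (fun h => haB (Finset.mem_of_mem_filter _ h))]
  simp only [deltaF, hcardf]
  push_cast
  ring

end Aux

/-- if `B ≤ A` is a minimal self-sufficient extension of finite sets whose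
new points are all black and `δ(A/B) = p − 1`, then `A = B ∪ {a}` for a single black
point `a` transcendental over the field generated by `B`. -/
theorem minimal_extension_black_top (K : Type*) [Field K] [IsAlgClosed K]
    (p : ℕ) (hp : 2 ≤ p) (N : Set K)
    (B A : Finset K) (hBA : B ⊂ A)
    (hss : ∀ C : Finset K, C ⊆ A → deltaF K p N (C ∩ B) ≤ deltaF K p N C)
    (hmin : ∀ Y' : Finset K, B ⊂ Y' → Y' ⊂ A →
      deltaF K p N A - deltaF K p N Y' < 0)
    (hblack : ∀ x ∈ A, x ∉ B → x ∈ N)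
    (hd : deltaF K p N A - deltaF K p N B = (p : ℤ) - 1) :
    ∃ a : K, a ∈ N ∧ A = B ∪ {a} ∧
      Transcendental (Subfield.closure (B : Set K)) a := by
  classical
  obtain ⟨a, haA, haB⟩ := Finset.exists_of_ssubset hBA
  have haN : a ∈ N := hblack a haA haB
  have hp' : (2 : ℤ) ≤ (p : ℤ) := by exact_mod_cast hp
  have hA : A = insert a B := by
    by_contra hne
    have hsub : insert a B ⊆ A := Finset.insert_subset haA hBA.subset
    have hss2 : insert a B ⊂ A := hsub.ssubset_of_ne (fun h => hne h.symm)
    have h1 := hmin (insert a B) (Finset.ssubset_insert haB) hss2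
    have h2 := delta_insert (K := K) (p := p) (N := N) haB haN
    have hm := ftrdeg_mono (K := K) (Finset.subset_insert a B)
    have hi := ftrdeg_insert_le B a
    rcases (show ftrdeg K (insert a B) = ftrdeg K B ∨
        ftrdeg K (insert a B) = ftrdeg K B + 1 by omega) with h | h <;>
      rw [h] at h2 <;> push_cast at h2 <;> ring_nf at h2 <;> linarith
  subst hA
  refine ⟨a, haN, by ext x; simp [or_comm], ?_⟩
  have h2 := delta_insert (K := K) (p := p) (N := N) haB haN
  have hm := ftrdeg_mono (K := K) (Finset.subset_insert a B)
  have hi := ftrdeg_insert_le B a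
  have ht : ftrdeg K (insert a B) = ftrdeg K B + 1 := by
    rcases (show ftrdeg K (insert a B) = ftrdeg K B ∨
        ftrdeg K (insert a B) = ftrdeg K B + 1 by omega) with h | h
    · exfalso
      rw [h] at h2
      push_cast at h2
      ring_nf at h2
      linarith
    · exact h
  intro halg
  have hle := ftrdeg_insert_le_of_isAlgebraic halg
  omega
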